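/- The noncommutative Boussinesq-type map Y₂ satisfies the Lax refactorisation equation L(u₁,u₂,u₃,u₄,a)·L(v₁,v₂,v₃,v₄,b) = L(y₁,y₂,y₃,y₄,b)·L(x₁,x₂,x₃,x₄,a) for all λ. -/
import Mathlib


/-- The Boussinesq Lax matrix `L(x₁,x₂,x₃,x₄,a,λ)` over a division ring `R`. -/
def LB {R : Type*} [DivisionRing R] (x1 x2 x3 x4 a lam : R) :
    Matrix (Fin 3) (Fin 3) R :=
  !![-x3, 1, 0;
     -x4, 0, 1;
     a - x1 * x3 - x2 * x4 - lam, x1, x2]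

/-- The noncommutative Boussinesq-type map `Y₂` (over a division ring `R`,
with `a, b, λ` central and `D = y₄ - x₁ - x₂y₃` invertible) satisfies the Lax
refactorisation `L(u,a) L(v,b) = L(y,b) L(x,a)` for all central `λ`. -/
theorem Y2_lax_refactorisation {R : Type*} [DivisionRing R]
    (a b x1 x2 x3 x4 y1 y2 y3 y4 : R)
    (ha : ∀ r : R, a * r = r * a) (hb : ∀ r : R, b * r = r * b)
    (hD : y4 - x1 - x2 * y3 ≠ 0)
    (u1 u2 u3 u4 v1 v2 v3 v4 : R)
    (hu1 : u1 = y1 - (a - b) * (y4 - x1 - x2 * y3)⁻¹ * x2)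
    (hu2 : u2 = y2 + (a - b) * (y4 - x1 - x2 * y3)⁻¹)
    (hu3 : u3 = y3)
    (hu4 : u4 = y4)
    (hv1 : v1 = x1)
    (hv2 : v2 = x2)
    (hv3 : v3 = x3 + (a - b) * (y4 - x1 - x2 * y3)⁻¹)
    (hv4 : v4 = x4 + (a - b) * y3 * (y4 - x1 - x2 * y3)⁻¹) :
    ∀ lam : R, (∀ r : R, lam * r = r * lam) →
      LB u1 u2 u3 u4 a lam * LB v1 v2 v3 v4 b lam
        = LB y1 y2 y3 y4 b lam * LB x1 x2 x3 x4 a lam := by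
  intro lam hlam
  subst hu1 hu2 hu3 hu4 hv1 hv2 hv3 hv4
  have hc : ∀ r : R, (a - b) * r = r * (a - b) := fun r => by
    rw [sub_mul, mul_sub, ha, hb]
  ext i j
  fin_cases i <;> fin_cases j <;>
    simp [LB, Matrix.mul_apply, Fin.sum_univ_three]
  all_goals (
    set d := (u4 - v1 - v2 * u3)⁻¹ with hdd
    have h1 : d * (u4 - v1 - v2 * u3) = 1 := inv_mul_cancel₀ hD
    have h2 : (u4 - v1 - v2 * u3) * d = 1 := mul_inv_cancel₀ hD)
  · -- entry (1,1)
    linear_combination (norm := noncomm_ring) - hc u3 * d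
  · -- entry (2,1)
    linear_combination (norm := noncomm_ring)
      (a - b) * h2 - hc u4 * d + hc v1 * d + hc v2 * (u3 * d)
  · -- entry (3,1)
    have hA : a - (y1 - (a - b) * d * v2) * u3 - (y2 + (a - b) * d) * u4 - lam
        = (b - y1 * u3 - y2 * u4 - lam) - (a - b) * d * v1 := by
      linear_combination (norm := noncomm_ring) -((a - b) * h1)
    have hB : b - v1 * (x3 + (a - b) * d) - v2 * (x4 + (a - b) * u3 * d) - lam
        = (b - v1 * x3 - v2 * x4 - lam) - u4 * ((a - b) * d) + (a - b) := by
      linear_combination (norm := noncomm_ring)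
        (a - b) * h2 - hc u4 * d + hc v1 * d + hc v2 * (u3 * d)
    rw [hA, hB]
    linear_combination (norm := noncomm_ring)
      - y1 * hc u3 * d
      + ((a - b) * d * v2) * hc u3 * d
      - (a - b) * hb d - hb (a - b) * d
      + (a - b) * hlam d + hlam (a - b) * d
      - (a - b) * h1 * ((a - b) * d)
      - (a - b) * hc d
  · -- entry (3,2)
    linear_combination (norm := noncomm_ring) -((a - b) * h1)
  · -- entry (3,3)
    noncomm_ring
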